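/- arXiv:2512.21800 — 2 statements merged into one kernel-verified Lean document; each statement's English description precedes it below -/
import Mathlib

section
/- For all integers d ≥ 0 and n ≥ 2(d+1), every 𝐁_{n,d}-free graph G satisfies χ(G) ≤ C(ω(G)−1+2d, 2d) + C(n−2, 2d+1), where C(a,b) denotes the binomial coefficient. -/
open SimpleGraph

/-- The join `K_m + H` construction: disjoint union with all edges in between. -/
def graphJoin {α β : Type*} (G : SimpleGraph α) (H : SimpleGraph β) :
    SimpleGraph (α ⊕ β) where
  Adj x y :=
    match x, y with
    | Sum.inl a, Sum.inl b => G.Adj a b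
    | Sum.inr a, Sum.inr b => H.Adj a b
    | Sum.inl _, Sum.inr _ => True
    | Sum.inr _, Sum.inl _ => True
  symm := ⟨by rintro (a|a) (b|b) h <;> simp_all [SimpleGraph.adj_comm]⟩
  loopless := ⟨by rintro (a|a) h <;> simp_all⟩

/-- `InB n d V H` says that the graph `H` on vertex type `V` belongs (up to
isomorphism) to the family `𝐁_{n,d}`: `𝐁_{n,0}` consists of the graphs on `n`
vertices having a vertex adjacent to all other vertices, and for `d > 0`,
`𝐁_{n,d} = ⋃_{m=2d}^{n−2} { K_{n−m−2} + (K₂ ∪ H') : H' ∈ 𝐁_{m,d−1} }`. -/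
def InB : ℕ → ℕ → (V : Type) → SimpleGraph V → Prop
  | n, 0, V, H => Nat.card V = n ∧ ∃ v : V, ∀ w : V, w ≠ v → H.Adj v w
  | n, d + 1, _, H => ∃ m : ℕ, 2 * (d + 1) ≤ m ∧ m ≤ n - 2 ∧
      ∃ (W : Type) (H' : SimpleGraph W), InB m d W H' ∧
        Nonempty (H ≃g graphJoin (⊤ : SimpleGraph (Fin (n - m - 2)))
          ((⊤ : SimpleGraph (Fin 2)) ⊕g H'))

/-- A graph `G` is `𝐁_{n,d}`-free if no induced subgraph of `G` is isomorphic to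
a member of `𝐁_{n,d}`. -/
def BFree (n d : ℕ) {V : Type} (G : SimpleGraph V) : Prop :=
  ∀ (W : Type) (H : SimpleGraph W), InB n d W H → IsEmpty (H ↪g G)

open Finset

/-- Vandermonde-type identity. -/
lemma vand (b : ℕ) : ∀ M : ℕ, ∑ k ∈ range (M+1), k * Nat.choose (M - k) b
    = Nat.choose (M+1) (b+2) := by
  induction b with
  | zero =>
    intro M
    simp only [Nat.choose_zero_right, mul_one]
    rw [Finset.sum_range_id, Nat.choose_two_right]
  | succ b ih =>
    intro M
    induction M with
    | zero => simp [Nat.choose_eq_zero_of_lt]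
    | succ M ihM =>
      rw [Finset.sum_range_succ]
      simp only [Nat.sub_self, Nat.choose_zero_succ, mul_zero, add_zero]
      have h1 : ∑ k ∈ range (M+1), k * Nat.choose (M + 1 - k) (b+1)
          = ∑ k ∈ range (M+1), (k * Nat.choose (M - k) b + k * Nat.choose (M - k) (b+1)) := by
        apply Finset.sum_congr rfl
        intro k hk
        rw [Finset.mem_range] at hk
        have : M + 1 - k = (M - k) + 1 := by omega
        rw [this, Nat.choose_succ_succ, Nat.mul_add]
      rw [h1, Finset.sum_add_distrib, ih M, ihM]
      rw [← Nat.choose_succ_succ]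

lemma sumA (e t : ℕ) :
    (t+1) + ∑ j ∈ range (t+1), j * Nat.choose (t+1-j+2*e) (2*e)
      = Nat.choose (t+2*e+2) (2*e+2) := by
  have h := vand (2*e) (t+1+2*e)
  have hM : t+1+2*e+1 = t+2*e+2 := by omega
  rw [hM] at h
  rw [← h]
  have hsplit := Finset.sum_range_add_sum_Ico (fun k => k * Nat.choose (t+1+2*e-k) (2*e))
    (show t+1 ≤ t+2*e+2 by omega)
  beta_reduce at hsplit
  rw [← hsplit]
  have h2 : ∑ k ∈ Finset.Ico (t+1) (t+2*e+2), k * Nat.choose (t+1+2*e-k) (2*e) = t+1 := by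
    rw [Finset.sum_eq_single_of_mem (t+1)]
    · have : t+1+2*e-(t+1) = 2*e := by omega
      rw [this, Nat.choose_self, mul_one]
    · rw [Finset.mem_Ico]; omega
    · intro k hk hne
      rw [Finset.mem_Ico] at hk
      have : Nat.choose (t+1+2*e-k) (2*e) = 0 := by
        apply Nat.choose_eq_zero_of_lt; omega
      rw [this, mul_zero]
  have h3 : ∑ j ∈ range (t+1), j * Nat.choose (t+1-j+2*e) (2*e)
      = ∑ j ∈ range (t+1), j * Nat.choose (t+1+2*e-j) (2*e) := by
    apply Finset.sum_congr rfl
    intro j hj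
    rw [Finset.mem_range] at hj
    congr 2
    omega
  rw [h3, h2]
  omega

lemma sumB (e n t : ℕ) (hn : 3 ≤ n) :
    ∑ j ∈ range (t+1), j * Nat.choose (n - j - 3) (2*e+1) ≤ Nat.choose (n-2) (2*e+3) := by
  have step1 : ∑ j ∈ range (t+1), j * Nat.choose (n - j - 3) (2*e+1)
      ≤ ∑ j ∈ range ((t+1) ⊔ (n-2)), j * Nat.choose (n - j - 3) (2*e+1) := by
    apply Finset.sum_le_sum_of_subset
    apply Finset.range_subset_range.2
    omega
  have step2 : ∑ j ∈ range (n-2), j * Nat.choose (n - j - 3) (2*e+1)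
      = ∑ j ∈ range ((t+1) ⊔ (n-2)), j * Nat.choose (n - j - 3) (2*e+1) := by
    apply Finset.sum_subset
    · apply Finset.range_subset_range.2; omega
    · intro x _ hx
      rw [Finset.mem_range, not_lt] at hx
      have : n - x - 3 = 0 := by omega
      rw [this]
      simp [Nat.choose_eq_zero_of_lt]
  rw [← step2] at step1
  refine le_trans step1 ?_
  have h := vand (2*e+1) (n-3)
  have h1 : n - 3 + 1 = n - 2 := by omega
  have h2 : 2*e+1+2 = 2*e+3 := by omega
  rw [h1, h2] at h
  rw [← h]
  apply le_of_eq
  apply Finset.sum_congr rfl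
  intro j _
  congr 2
  omega

open SimpleGraph in
/-- Greedy coloring: if every vertex has at most `k` neighbors, the graph is
`(k+1)`-colorable. -/
lemma colorable_of_degree_le (k : ℕ) : ∀ (m : ℕ) (V : Type) [Fintype V] (G : SimpleGraph V),
    Fintype.card V = m → (∀ v : V, (G.neighborSet v).ncard ≤ k) → G.Colorable (k+1) := by
  intro m
  induction m with
  | zero =>
    intro V _ G hm _
    have : IsEmpty V := Fintype.card_eq_zero_iff.mp hm
    exact SimpleGraph.Colorable.of_isEmpty (G := G) _
  | succ m ih =>
    intro V _ G hm hdeg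
    classical
    have : Nonempty V := Fintype.card_pos_iff.mp (by omega)
    obtain ⟨v⟩ := this
    set s : Set V := {v}ᶜ with hs
    have hcards : Fintype.card s = m := by
      have h1 := Set.ncard_add_ncard_compl ({v} : Set V)
      rw [Set.ncard_singleton, Nat.card_eq_fintype_card, hm] at h1
      rw [← Nat.card_eq_fintype_card, Nat.card_coe_set_eq, hs]
      omega
    have hdeg' : ∀ w : s, ((G.induce s).neighborSet w).ncard ≤ k := by
      intro w
      refine le_trans ?_ (hdeg w.val)
      apply Set.ncard_le_ncard_of_injOn (fun x => x.val)
      · intro x hx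
        exact hx
      · exact fun a _ b _ hab => Subtype.ext hab
    obtain ⟨C⟩ := ih s (G.induce s) hcards hdeg'
    -- find a color free for v
    have hA : ∃ c : Fin (k+1), ∀ w : s, G.Adj v w.val → C w ≠ c := by
      by_contra hcon
      push_neg at hcon
      -- every color is realized on a neighbor of v
      have hsub : (Set.univ : Set (Fin (k+1))) ⊆ C '' {w : s | G.Adj v w.val} := by
        intro c _
        obtain ⟨w, hw, hc⟩ := hcon c
        exact ⟨w, hw, hc⟩
      have h1 : (Set.univ : Set (Fin (k+1))).ncard ≤ (C '' {w : s | G.Adj v w.val}).ncard :=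
        Set.ncard_le_ncard hsub (Set.toFinite _)
      have h2 : (C '' {w : s | G.Adj v w.val}).ncard ≤ ({w : s | G.Adj v w.val}).ncard :=
        Set.ncard_image_le (Set.toFinite _)
      have h3 : ({w : s | G.Adj v w.val}).ncard ≤ (G.neighborSet v).ncard := by
        apply Set.ncard_le_ncard_of_injOn (fun x => x.val)
        · intro x hx; exact hx
        · exact fun a _ b _ hab => Subtype.ext hab
      have h4 : (Set.univ : Set (Fin (k+1))).ncard = k+1 := by
        simp [Set.ncard_univ]
      have := hdeg v
      omega
    obtain ⟨c, hc⟩ := hA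
    refine ⟨Coloring.mk (fun w => if h : w = v then c else C ⟨w, h⟩) ?_⟩
    intro a b hab
    by_cases ha : a = v <;> by_cases hb : b = v
    · rw [ha, hb] at hab; exact absurd hab (G.loopless.irrefl v)
    · simp only [dif_pos ha, dif_neg hb]
      rw [ha] at hab
      exact fun h => hc ⟨b, hb⟩ hab h.symm
    · simp only [dif_neg ha, dif_pos hb]
      rw [hb] at hab
      exact fun h => hc ⟨a, ha⟩ (G.adj_symm hab) h
    · simp only [dif_neg ha, dif_neg hb]
      exact C.valid (by exact hab)

open SimpleGraph in
/-- If the vertices are classified by `p : V → ι` and each class induces a graph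
colorable with `k i` colors, then `G` is colorable with `∑ i, k i` colors. -/
lemma colorable_of_partition {V : Type} [Fintype V] {ι : Type} [Fintype ι] [DecidableEq ι]
    (G : SimpleGraph V) (p : V → ι) (k : ι → ℕ)
    (h : ∀ i, (G.induce {v | p v = i}).Colorable (k i)) :
    G.Colorable (∑ i, k i) := by
  classical
  set e := Fintype.equivFin ι with he
  -- bounded ℕ-colorings of each class
  have h' : ∀ i, ∃ C : (G.induce {v | p v = i}).Coloring ℕ, ∀ w, C w < k i := by
    intro i
    exact (colorable_iff_exists_bdd_nat_coloring _).mp (h i)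
  choose C hC using h'
  set off : ι → ℕ := fun i => ∑ j ∈ Finset.univ.filter (fun j => e j < e i), k j with hoff
  have hoffk : ∀ i, off i + k i ≤ ∑ j, k j := by
    intro i
    have : (Finset.univ.filter (fun j => e j < e i)).sum k + k i
        = (insert i (Finset.univ.filter (fun j => e j < e i))).sum k := by
      rw [Finset.sum_insert (by simp)]
      ring
    rw [hoff]
    rw [this]
    apply Finset.sum_le_sum_of_subset
    intro x _
    exact Finset.mem_univ x
  have hoffmono : ∀ i j, e i < e j → off i + k i ≤ off j := by
    intro i j hij
    have : (insert i (Finset.univ.filter (fun l => e l < e i)))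
        ⊆ Finset.univ.filter (fun l => e l < e j) := by
      intro x hx
      rcases Finset.mem_insert.mp hx with rfl | hx
      · simp [hij]
      · simp only [Finset.mem_filter] at hx ⊢
        exact ⟨Finset.mem_univ x, lt_trans hx.2 hij⟩
    calc off i + k i = (insert i (Finset.univ.filter (fun l => e l < e i))).sum k := by
          rw [Finset.sum_insert (by simp), hoff]; ring
      _ ≤ _ := Finset.sum_le_sum_of_subset this
  set c : V → ℕ := fun v => off (p v) + C (p v) ⟨v, rfl⟩ with hc
  have key : ∀ (i : ι) (x : V) (hx : p x = i), c x = off i + C i ⟨x, hx⟩ := by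
    intro i x hx
    subst hx
    rfl
  have hbd : ∀ v, c v < ∑ j, k j := by
    intro v
    have := hC (p v) ⟨v, rfl⟩
    have := hoffk (p v)
    rw [hc]
    simp only
    omega
  apply (colorable_iff_exists_bdd_nat_coloring _).mpr
  refine ⟨Coloring.mk c ?_, hbd⟩
  intro a b hab
  rcases lt_trichotomy (e (p a)) (e (p b)) with hlt | heq | hgt
  · have h1 : c a < off (p a) + k (p a) := by
      have := hC (p a) ⟨a, rfl⟩
      rw [hc]; simp only; omega
    have h2 : off (p b) ≤ c b := by rw [hc]; simp only; omega
    have := hoffmono _ _ hlt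
    omega
  · have hpq : p a = p b := e.injective heq
    rw [key (p a) a rfl, key (p a) b hpq.symm]
    intro hcontra
    have hne : C (p a) ⟨a, rfl⟩ ≠ C (p a) ⟨b, hpq.symm⟩ := by
      apply (C (p a)).valid
      exact hab
    omega
  · have h1 : c b < off (p b) + k (p b) := by
      have := hC (p b) ⟨b, rfl⟩
      rw [hc]; simp only; omega
    have h2 : off (p a) ≤ c a := by rw [hc]; simp only; omega
    have := hoffmono _ _ hgt
    omega


lemma degree_bound_of_BFree_zero {V : Type} [Fintype V] {G : SimpleGraph V} {n : ℕ}
    (hn : 2 ≤ n) (hG : BFree n 0 G) (v : V) : (G.neighborSet v).ncard ≤ n - 2 := by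
  classical
  by_contra hcon
  push_neg at hcon
  have h1 : n - 1 ≤ (G.neighborSet v).ncard := by omega
  obtain ⟨S, hSsub, hScard⟩ := Set.exists_subset_card_eq h1
  have hvS : v ∉ S := fun h => G.loopless.irrefl v (hSsub h)
  set T : Set V := insert v S with hT
  have hTcard : T.ncard = n := by
    rw [hT, Set.ncard_insert_of_notMem hvS (Set.toFinite _), hScard]
    omega
  have hInB : InB n 0 T (G.induce T) := by
    refine ⟨by rw [Nat.card_coe_set_eq]; exact hTcard, ⟨v, Set.mem_insert v S⟩, ?_⟩
    rintro ⟨w, hw⟩ hne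
    have hwS : w ∈ S := by
      rcases hw with rfl | h
      · exact absurd (Subtype.ext rfl) hne
      · exact h
    exact hSsub hwS
  exact (hG T (G.induce T) hInB).false (SimpleGraph.Embedding.induce T)

section YClass

variable {V : Type} [Fintype V] {G : SimpleGraph V}

/-- Key lemma: the class of vertices whose two first non-neighbours in the maximum
clique are `v i` and `v j` induces a `B_{m,e}`-free graph, and its clique number is
small; hence by induction it is colorable with few colors. -/
lemma yclass_colorable (e n : ℕ) (hn : 2 * (e + 2) ≤ n)
    (ihe : ∀ (n' : ℕ), 2 * (e + 1) ≤ n' → ∀ (U : Type) [Fintype U] (G' : SimpleGraph U),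
      BFree n' e G' → G'.Colorable
        ((G'.cliqueNum - 1 + 2 * e).choose (2 * e) + (n' - 2).choose (2 * e + 1)))
    (hG : BFree n (e + 1) G)
    {ω : ℕ} (hωG : ω = G.cliqueNum) (vm : Fin ω → V)
    (vminj : Function.Injective vm)
    (vmadj : ∀ k l, k ≠ l → G.Adj (vm k) (vm l))
    (i j : Fin ω) (hij : i < j)
    (Yset : Set V)
    (hYs : ∀ x ∈ Yset, ∀ k, k < j → k ≠ i → G.Adj x (vm k))
    (hYi : ∀ x ∈ Yset, ¬ G.Adj x (vm i))
    (hYj : ∀ x ∈ Yset, ¬ G.Adj x (vm j))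
    (hYvm : ∀ x ∈ Yset, ∀ k, x ≠ vm k) :
    (G.induce Yset).Colorable
      ((ω - (j : ℕ) + 2 * e).choose (2 * e) + (n - (j : ℕ) - 3).choose (2 * e + 1)) := by
  classical
  have hj1 : 1 ≤ (j : ℕ) := by
    have : (i : ℕ) < (j : ℕ) := hij
    omega
  set Dfin : Finset (Fin ω) := (Finset.univ.filter (fun k => k < j)).erase i with hDfin
  have hDmem : ∀ k, k ∈ Dfin ↔ (k < j ∧ k ≠ i) := by
    intro k
    rw [hDfin, Finset.mem_erase, Finset.mem_filter]
    simp only [Finset.mem_univ, true_and]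
    tauto
  have hDcard : Dfin.card = (j : ℕ) - 1 := by
    rw [hDfin]
    have hfe : Finset.univ.filter (fun k => k < j) = Finset.Iio j := by
      ext k; simp
    rw [Finset.card_erase_of_mem (by rw [hfe]; simpa using hij), hfe, Fin.card_Iio]
  -- the clique number bound
  have hclq : (G.induce Yset).cliqueNum + ((j : ℕ) - 1) ≤ ω := by
    obtain ⟨T, hT⟩ := (G.induce Yset).exists_isNClique_cliqueNum
    set U : Finset V := T.image Subtype.val ∪ Dfin.image vm with hU
    have hdisj : Disjoint (T.image Subtype.val) (Dfin.image vm) := by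
      rw [Finset.disjoint_left]
      intro a ha hb
      obtain ⟨x, _, rfl⟩ := Finset.mem_image.mp ha
      obtain ⟨k, _, hk⟩ := Finset.mem_image.mp hb
      exact hYvm x.val x.2 k hk.symm
    have hUcard : U.card = (G.induce Yset).cliqueNum + ((j : ℕ) - 1) := by
      rw [hU, Finset.card_union_of_disjoint hdisj,
        Finset.card_image_of_injective _ Subtype.val_injective,
        Finset.card_image_of_injective _ vminj, hT.2, hDcard]
    have hUclique : G.IsClique U := by
      intro a ha b hb hne
      simp only [hU, Finset.coe_union, Set.mem_union, Finset.coe_image, Set.mem_image] at ha hb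
      rcases ha with ⟨x, hx, rfl⟩ | ⟨k, hk, rfl⟩ <;> rcases hb with ⟨y, hy, rfl⟩ | ⟨l, hl, rfl⟩
      · have hxy : x ≠ y := fun h => hne (congrArg _ h)
        exact hT.1 (by simpa using hx) (by simpa using hy) hxy
      · have hl' := (hDmem l).mp (by simpa using hl)
        exact hYs x.val x.2 l hl'.1 hl'.2
      · have hk' := (hDmem k).mp (by simpa using hk)
        exact (hYs y.val y.2 k hk'.1 hk'.2).symm
      · exact vmadj k l (fun h => hne (congrArg vm h))
    have := IsClique.card_le_cliqueNum (tc := hUclique)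
    rw [hUcard] at this
    omega
  -- the induced graph is B_{n',e}-free
  set n' : ℕ := max (2 * (e + 1)) (n - (j : ℕ) - 1) with hn'
  have hfree : BFree n' e (G.induce Yset) := by
    intro W H' hInB'
    constructor
    intro f
    set c : ℕ := n - n' - 2 with hc
    have hcle : c ≤ (j : ℕ) - 1 := by
      have h1 : n - (j : ℕ) - 1 ≤ n' := le_max_right _ _
      omega
    obtain ⟨t, hts, htc⟩ := Finset.exists_subset_card_eq (s := Dfin) (n := c) (by rw [hDcard]; exact hcle)
    set dm : Fin c → Fin ω := fun a => (t.equivFin.symm (Fin.cast htc.symm a)).val with hdm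
    have dmmem : ∀ a, dm a ∈ Dfin := fun a => hts (t.equivFin.symm (Fin.cast htc.symm a)).2
    have dmj : ∀ a, dm a < j := fun a => ((hDmem _).mp (dmmem a)).1
    have dmi : ∀ a, dm a ≠ i := fun a => ((hDmem _).mp (dmmem a)).2
    have dminj : Function.Injective dm := by
      intro a b hab
      have := t.equivFin.symm.injective (Subtype.ext hab)
      simpa [Fin.ext_iff] using congrArg Fin.val this
    -- the big forbidden graph
    set Hbig : SimpleGraph (Fin (n - n' - 2) ⊕ (Fin 2 ⊕ W)) :=
      graphJoin (⊤ : SimpleGraph (Fin (n - n' - 2))) ((⊤ : SimpleGraph (Fin 2)) ⊕g H') with hHbig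
    have hInBbig : InB n (e + 1) _ Hbig := by
      refine ⟨n', le_max_left _ _, ?_, W, H', hInB', ⟨RelIso.refl _⟩⟩
      have h2 : 2 * (e + 1) ≤ n - 2 := by omega
      have h3 : n - (j : ℕ) - 1 ≤ n - 2 := by omega
      omega
    -- now build the embedding Hbig ↪g G
    set F : (Fin (n - n' - 2) ⊕ (Fin 2 ⊕ W)) → V := fun x =>
      match x with
      | Sum.inl a => vm (dm a)
      | Sum.inr (Sum.inl z) => if z = 0 then vm i else vm j
      | Sum.inr (Sum.inr w) => (f w).val with hF
    have hFvmz : ∀ (z : Fin 2), (if z = 0 then vm i else vm j) = vm (if z = 0 then i else j) := by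
      intro z; split <;> rfl
    have hijne : i ≠ j := Fin.ne_of_lt hij
    have Finj : Function.Injective F := by
      rintro (a | (z | w)) (b | (z' | w')) hxy <;> simp only [hF] at hxy
      · rw [dminj (vminj hxy)]
      · rw [hFvmz] at hxy
        have := vminj hxy
        split at this
        · exact absurd this (dmi a)
        · exact absurd this (Fin.ne_of_lt (dmj a))
      · exact absurd hxy.symm (hYvm (f w').val (f w').2 (dm a))
      · rw [hFvmz] at hxy
        have := vminj hxy
        split at this
        · exact absurd this.symm (dmi b)
        · exact absurd this.symm (Fin.ne_of_lt (dmj b))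
      · rw [hFvmz, hFvmz] at hxy
        have := vminj hxy
        congr 2
        split at this <;> split at this
        · omega
        · exact absurd this hijne
        · exact absurd this.symm hijne
        · omega
      · rw [hFvmz] at hxy
        exact absurd hxy.symm (hYvm (f w').val (f w').2 _)
      · exact absurd hxy (hYvm (f w).val (f w).2 (dm b))
      · rw [hFvmz] at hxy
        exact absurd hxy (hYvm (f w).val (f w).2 _)
      · rw [f.injective (Subtype.ext hxy)]
    have h0 : (if (0 : Fin 2) = 0 then vm i else vm j) = vm i := if_pos rfl
    have h1 : (if (1 : Fin 2) = 0 then vm i else vm j) = vm j := if_neg (by decide)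
    have hadj : ∀ x y, G.Adj (F x) (F y) ↔ Hbig.Adj x y := by
      rintro (a | (z | w)) (b | (z' | w'))
      · show G.Adj (vm (dm a)) (vm (dm b)) ↔ (⊤ : SimpleGraph (Fin (n - n' - 2))).Adj a b
        rw [top_adj]
        constructor
        · intro h hab
          exact G.loopless.irrefl _ (by rw [hab] at h; exact h)
        · intro h
          exact vmadj _ _ (fun hd => h (dminj hd))
      · show G.Adj (vm (dm a)) (if z' = 0 then vm i else vm j) ↔ True
        rw [iff_true]
        split
        · exact vmadj _ _ (dmi a)
        · exact vmadj _ _ (Fin.ne_of_lt (dmj a))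
      · show G.Adj (vm (dm a)) (f w').val ↔ True
        rw [iff_true]
        exact (hYs (f w').val (f w').2 (dm a) (dmj a) (dmi a)).symm
      · show G.Adj (if z = 0 then vm i else vm j) (vm (dm b)) ↔ True
        rw [iff_true]
        split
        · exact vmadj _ _ (Ne.symm (dmi b))
        · exact vmadj _ _ (Ne.symm (Fin.ne_of_lt (dmj b)))
      · show G.Adj (if z = 0 then vm i else vm j) (if z' = 0 then vm i else vm j)
          ↔ (⊤ : SimpleGraph (Fin 2)).Adj z z'
        rw [top_adj]
        rcases (show z = 0 ∨ z = 1 by omega) with rfl | rfl <;>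
          rcases (show z' = 0 ∨ z' = 1 by omega) with rfl | rfl
        · rw [h0]
          exact iff_of_false (G.loopless.irrefl _) (by simp)
        · rw [h0, h1]
          exact iff_of_true (vmadj i j hijne) (by decide)
        · rw [h0, h1]
          exact iff_of_true (vmadj j i hijne.symm) (by decide)
        · rw [h1]
          exact iff_of_false (G.loopless.irrefl _) (by simp)
      · show G.Adj (if z = 0 then vm i else vm j) (f w').val
          ↔ ((⊤ : SimpleGraph (Fin 2)) ⊕g H').Adj (Sum.inl z) (Sum.inr w')
        rw [SimpleGraph.sum_adj]
        rw [iff_false]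
        intro h
        rcases (show z = 0 ∨ z = 1 by omega) with rfl | rfl
        · rw [h0] at h
          exact hYi (f w').val (f w').2 h.symm
        · rw [h1] at h
          exact hYj (f w').val (f w').2 h.symm
      · show G.Adj (f w).val (vm (dm b)) ↔ True
        rw [iff_true]
        exact hYs (f w).val (f w).2 (dm b) (dmj b) (dmi b)
      · show G.Adj (f w).val (if z' = 0 then vm i else vm j)
          ↔ ((⊤ : SimpleGraph (Fin 2)) ⊕g H').Adj (Sum.inr w) (Sum.inl z')
        rw [SimpleGraph.sum_adj]
        rw [iff_false]
        intro h
        rcases (show z' = 0 ∨ z' = 1 by omega) with rfl | rfl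
        · rw [h0] at h
          exact hYi (f w).val (f w).2 h
        · rw [h1] at h
          exact hYj (f w).val (f w).2 h
      · show G.Adj (f w).val (f w').val ↔ H'.Adj w w'
        constructor
        · intro h
          exact f.map_rel_iff.mp h
        · intro h
          exact f.map_rel_iff.mpr h
    exact (hG _ Hbig hInBbig).false ⟨⟨F, Finj⟩, fun {x y} => hadj x y⟩
  -- apply the inductive hypothesis
  have hcol := ihe n' (le_max_left _ _) Yset (G.induce Yset) hfree
  refine hcol.mono ?_
  apply Nat.add_le_add
  · apply Nat.choose_le_choose
    omega
  · rcases le_or_gt (2 * (e + 1)) (n - (j : ℕ) - 1) with h | h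
    · have : n' = n - (j : ℕ) - 1 := max_eq_right h
      rw [this]
      apply Nat.choose_le_choose
      omega
    · have : n' = 2 * (e + 1) := max_eq_left (le_of_lt h)
      rw [this]
      have : (2 * (e + 1) - 2).choose (2 * e + 1) = 0 :=
        Nat.choose_eq_zero_of_lt (by omega)
      rw [this]
      exact Nat.zero_le _

end YClass

lemma key_colorable (d : ℕ) : ∀ (n : ℕ), 2 * (d + 1) ≤ n →
    ∀ (V : Type) [Fintype V] (G : SimpleGraph V), BFree n d G →
    G.Colorable ((G.cliqueNum - 1 + 2 * d).choose (2 * d) + (n - 2).choose (2 * d + 1)) := by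
  induction d with
  | zero =>
    intro n hn V _ G hG
    have hdeg := degree_bound_of_BFree_zero (by omega) hG
    have hcol := colorable_of_degree_le (n - 2) (Fintype.card V) V G rfl hdeg
    refine hcol.mono ?_
    rw [show 2 * 0 = 0 from rfl, Nat.choose_zero_right, Nat.choose_one_right]
    omega
  | succ e ih =>
    intro n hn V _ G hG
    classical
    by_cases hV : IsEmpty V
    · exact SimpleGraph.Colorable.of_isEmpty (G := G) _
    rw [not_isEmpty_iff] at hV
    obtain ⟨s, hs⟩ := G.exists_isNClique_cliqueNum
    set ω := G.cliqueNum with hω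
    have hscard : s.card = ω := hs.2
    have hsclique : G.IsClique ↑s := hs.1
    have hω1 : 1 ≤ ω := by
      obtain ⟨v⟩ := hV
      have h1 : ({v} : Finset V).card ≤ G.cliqueNum :=
        IsClique.card_le_cliqueNum (tc := by simp)
      rw [← hω] at h1
      simpa using h1
    -- enumeration of the maximum clique
    set vm : Fin ω → V := fun i => (s.equivFin.symm (Fin.cast hscard.symm i)).val with hvm
    have vminj : Function.Injective vm := by
      intro a b hab
      have := s.equivFin.symm.injective (Subtype.ext hab)
      simpa [Fin.ext_iff] using congrArg Fin.val this
    have vmmem : ∀ i, vm i ∈ s := fun i => (s.equivFin.symm _).2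
    have vmadj : ∀ k l, k ≠ l → G.Adj (vm k) (vm l) := fun k l hkl =>
      hsclique (vmmem k) (vmmem l) (fun h => hkl (vminj (by exact h)))
    have vmsurj : ∀ x (hx : x ∈ s), vm (Fin.cast hscard (s.equivFin ⟨x, hx⟩)) = x := by
      intro x hx
      rw [hvm]
      simp only
      have h1 : Fin.cast hscard.symm (Fin.cast hscard (s.equivFin ⟨x, hx⟩))
          = s.equivFin ⟨x, hx⟩ := by ext; rfl
      rw [h1, Equiv.symm_apply_apply]
    -- non-neighbour sets
    set NN : V → Finset (Fin ω) :=
      fun x => Finset.univ.filter (fun i => ¬ G.Adj x (vm i) ∧ x ≠ vm i) with hNN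
    have hNNmem : ∀ x i, i ∈ NN x ↔ (¬ G.Adj x (vm i) ∧ x ≠ vm i) := by
      intro x i
      rw [hNN]
      simp
    have hNNne : ∀ x, x ∉ s → (NN x).Nonempty := by
      intro x hxs
      rw [Finset.nonempty_iff_ne_empty]
      intro hcon
      have hadj : ∀ i, G.Adj x (vm i) := by
        intro i
        by_contra hna
        have hmem : i ∈ NN x := (hNNmem x i).mpr ⟨hna, fun h => hxs (h ▸ vmmem i)⟩
        rw [hcon] at hmem
        exact absurd hmem (Finset.notMem_empty i)
      have hclique : G.IsClique ↑(insert x s) := by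
        rw [Finset.coe_insert]
        intro a ha b hb hne
        rcases ha with rfl | ha <;> rcases hb with rfl | hb
        · exact absurd rfl hne
        · rw [← vmsurj b hb]; exact hadj _
        · rw [← vmsurj a ha]
          exact (hadj _).symm
        · exact hsclique ha hb hne
      have hcard := IsClique.card_le_cliqueNum (tc := hclique)
      rw [Finset.card_insert_of_notMem hxs, hscard, ← hω] at hcard
      omega
    -- the classification
    set p : V → (Fin ω ⊕ (Fin ω × Fin ω)) := fun x =>
      if hx : x ∈ s then Sum.inl (Fin.cast hscard (s.equivFin ⟨x, hx⟩))
      else if hj : ((NN x).erase ((NN x).min' (hNNne x hx))).Nonempty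
        then Sum.inr ((NN x).min' (hNNne x hx),
          ((NN x).erase ((NN x).min' (hNNne x hx))).min' hj)
        else Sum.inl ((NN x).min' (hNNne x hx)) with hp
    have F1 : ∀ x (hx : x ∈ s), p x = Sum.inl (Fin.cast hscard (s.equivFin ⟨x, hx⟩)) := by
      intro x hx
      rw [hp]
      simp only [dif_pos hx]
    have Finl : ∀ x i, x ∉ s → p x = Sum.inl i →
        ¬ G.Adj x (vm i) ∧ ∀ k, k ≠ i → G.Adj x (vm k) := by
      intro x i hxs hpx
      rw [hp] at hpx
      simp only [dif_neg hxs] at hpx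
      split at hpx
      · exact absurd hpx (by simp)
      · rename_i hjne
        have hi : i = (NN x).min' (hNNne x hxs) := (Sum.inl.inj hpx).symm
        have himem : i ∈ NN x := hi ▸ (NN x).min'_mem (hNNne x hxs)
        refine ⟨((hNNmem x i).mp himem).1, ?_⟩
        intro k hk
        have hknot : k ∉ NN x := by
          intro hkmem
          apply hjne
          exact ⟨k, Finset.mem_erase.mpr ⟨by rw [← hi]; exact hk, hkmem⟩⟩
        rcases not_and_or.mp ((hNNmem x k).not.mp  hknot) with h | h
        · exact not_not.mp h
        · exact absurd (not_not.mp h) (fun hh => hxs (hh ▸ vmmem k))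
    have Finr : ∀ x i j, p x = Sum.inr (i, j) →
        x ∉ s ∧ i < j ∧ ¬ G.Adj x (vm i) ∧ ¬ G.Adj x (vm j) ∧
          (∀ k, k < j → k ≠ i → G.Adj x (vm k)) ∧ (∀ k, x ≠ vm k) := by
      intro x i j hpx
      rw [hp] at hpx
      by_cases hxs : x ∈ s
      · simp only [dif_pos hxs] at hpx
        exact absurd hpx (by simp)
      simp only [dif_neg hxs] at hpx
      split at hpx
      swap
      · exact absurd hpx (by simp)
      rename_i hjne
      obtain ⟨hi, hj⟩ : i = (NN x).min' (hNNne x hxs)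
          ∧ j = ((NN x).erase ((NN x).min' (hNNne x hxs))).min' hjne := by
        have h := Sum.inr.inj hpx
        exact ⟨(congrArg Prod.fst h).symm, (congrArg Prod.snd h).symm⟩
      have hne : ∀ k, x ≠ vm k := fun k hh => hxs (hh ▸ vmmem k)
      have himem : i ∈ NN x := hi ▸ (NN x).min'_mem (hNNne x hxs)
      have hjmem' : j ∈ (NN x).erase ((NN x).min' (hNNne x hxs)) :=
        hj ▸ Finset.min'_mem _ hjne
      have hjmem : j ∈ NN x := (Finset.mem_erase.mp hjmem').2
      have hji : j ≠ i := by
        have h2 := (Finset.mem_erase.mp hjmem').1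
        rw [← hi] at h2
        exact h2
      have hij : i < j := by
        have h2 := (NN x).min'_le j hjmem
        rw [← hi] at h2
        exact lt_of_le_of_ne h2 (fun h => hji h.symm)
      refine ⟨hxs, hij, ((hNNmem x i).mp himem).1, ((hNNmem x j).mp hjmem).1, ?_, hne⟩
      intro k hkj hki
      have hknot : k ∉ NN x := by
        intro hkmem
        have hk' : k ∈ (NN x).erase ((NN x).min' (hNNne x hxs)) :=
          Finset.mem_erase.mpr ⟨by rw [← hi]; exact hki, hkmem⟩
        have hle := Finset.min'_le _ k hk'
        rw [← hj] at hle
        exact absurd hkj (not_lt.mpr hle)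
      rcases not_and_or.mp ((hNNmem x k).not.mp hknot) with h | h
      · exact not_not.mp h
      · exact absurd (not_not.mp h) (hne k)
    -- adjacency helper for `inl` classes
    have hadjvm : ∀ u i, p u = Sum.inl i → ∀ k, k ≠ i → G.Adj u (vm k) := by
      intro u i hu k hk
      by_cases hus : u ∈ s
      · have h1 := F1 u hus
        rw [hu] at h1
        have h2 : i = Fin.cast hscard (s.equivFin ⟨u, hus⟩) := Sum.inl.inj h1
        have h3 : vm i = u := by rw [h2]; exact vmsurj u hus
        rw [← h3]
        exact vmadj i k (Ne.symm hk)
      · exact (Finl u i hus hu).2 k hk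
    have hueqvm : ∀ u i, p u = Sum.inl i → u ∈ s → u = vm i := by
      intro u i hu hus
      have h1 := F1 u hus
      rw [hu] at h1
      have h2 : i = Fin.cast hscard (s.equivFin ⟨u, hus⟩) := Sum.inl.inj h1
      rw [h2]; exact (vmsurj u hus).symm
    -- independence of the `inl` classes
    have Indep : ∀ i a b, p a = Sum.inl i → p b = Sum.inl i → a ≠ b → ¬ G.Adj a b := by
      intro i a b hpa hpb hne hadj
      have herase : ∀ w ∈ s.erase (vm i), ∃ k, k ≠ i ∧ w = vm k := by
        intro w hw
        obtain ⟨hwne, hws⟩ := Finset.mem_erase.mp hw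
        refine ⟨Fin.cast hscard (s.equivFin ⟨w, hws⟩), ?_, (vmsurj w hws).symm⟩
        intro h
        apply hwne
        rw [← vmsurj w hws, h]
      have hnotmem : ∀ u, p u = Sum.inl i → u ∉ s.erase (vm i) := by
        intro u hu hmem
        obtain ⟨hune, hus⟩ := Finset.mem_erase.mp hmem
        exact hune (hueqvm u i hu hus)
      have hadjerase : ∀ u, p u = Sum.inl i → ∀ w ∈ s.erase (vm i), G.Adj u w := by
        intro u hu w hw
        obtain ⟨k, hki, rfl⟩ := herase w hw
        exact hadjvm u i hu k hki
      set U : Finset V := insert a (insert b (s.erase (vm i))) with hU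
      have hUclique : G.IsClique ↑U := by
        rw [hU]
        intro u hu w hw hneuw
        simp only [Finset.coe_insert, Set.mem_insert_iff, Finset.mem_coe] at hu hw
        rcases hu with rfl | rfl | hu <;> rcases hw with rfl | rfl | hw
        · exact absurd rfl hneuw
        · exact hadj
        · exact hadjerase u hpa w hw
        · exact hadj.symm
        · exact absurd rfl hneuw
        · exact hadjerase u hpb w hw
        · exact (hadjerase w hpa u hu).symm
        · exact (hadjerase w hpb u hu).symm
        · exact hsclique (Finset.mem_erase.mp hu).2 (Finset.mem_erase.mp hw).2 hneuw
      have hUcard : U.card = ω + 1 := by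
        rw [hU, Finset.card_insert_of_notMem, Finset.card_insert_of_notMem
          (hnotmem b hpb), Finset.card_erase_of_mem (vmmem i), hscard]
        · omega
        · rw [Finset.mem_insert]
          push_neg
          exact ⟨hne, hnotmem a hpa⟩
      have := IsClique.card_le_cliqueNum (tc := hUclique)
      rw [hUcard, ← hω] at this
      omega
    -- color count for each class
    set kf : (Fin ω ⊕ (Fin ω × Fin ω)) → ℕ := Sum.elim (fun _ => 1)
      (fun q => if q.1 < q.2 then
        (ω - (q.2 : ℕ) + 2 * e).choose (2 * e) + (n - (q.2 : ℕ) - 3).choose (2 * e + 1)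
        else 0) with hkf
    have hcls : ∀ idx, (G.induce {x | p x = idx}).Colorable (kf idx) := by
      rintro (i | ⟨i, j⟩)
      · have hone : kf (Sum.inl i) = 1 := rfl
        rw [hone]
        refine ⟨Coloring.mk (fun _ => 0) ?_⟩
        rintro ⟨a, ha⟩ ⟨b, hb⟩ hab
        have hGab : G.Adj a b := hab
        exact absurd trivial (fun _ => Indep i a b ha hb hGab.ne hGab)
      · by_cases hij : i < j
        · have hcol := yclass_colorable e n hn ih hG hω vm vminj vmadj i j hij
            {x | p x = Sum.inr (i, j)}
            (fun x hx => (Finr x i j hx).2.2.2.2.1)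
            (fun x hx => (Finr x i j hx).2.2.1)
            (fun x hx => (Finr x i j hx).2.2.2.1)
            (fun x hx => (Finr x i j hx).2.2.2.2.2)
          refine hcol.mono ?_
          rw [hkf]
          simp only [Sum.elim_inr, if_pos hij]
          exact le_rfl
        · haveI hempty : IsEmpty {x | p x = Sum.inr (i, j)} := by
            constructor
            rintro ⟨x, hx⟩
            exact hij (Finr x i j hx).2.1
          exact SimpleGraph.Colorable.of_isEmpty (G := G.induce _) _
    have hcolall := colorable_of_partition G p kf hcls
    refine hcolall.mono ?_
    -- compute the total number of colors
    have hsum1 : ∑ idx : Fin ω ⊕ Fin ω × Fin ω, kf idx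
        = ω + ∑ jj ∈ Finset.range ω, jj *
            ((ω - jj + 2 * e).choose (2 * e) + (n - jj - 3).choose (2 * e + 1)) := by
      rw [Fintype.sum_sum_type]
      congr 1
      · rw [hkf]
        simp
      · rw [Fintype.sum_prod_type_right, ← Fin.sum_univ_eq_sum_range]
        apply Finset.sum_congr rfl
        intro j _
        rw [hkf]
        simp only [Sum.elim_inr]
        rw [Finset.sum_ite, Finset.sum_const_zero, add_zero, Finset.sum_const, smul_eq_mul]
        congr 1
        have hfi : Finset.univ.filter (fun i : Fin ω => i < j) = Finset.Iio j := by
          ext; simp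
        rw [hfi, Fin.card_Iio]
    rw [hsum1]
    -- final arithmetic
    obtain ⟨t, ht⟩ : ∃ t, ω = t + 1 := ⟨ω - 1, by omega⟩
    rw [ht]
    have hA := sumA e t
    have hB := sumB e n t (by omega)
    have hsplit : ∑ jj ∈ Finset.range (t+1), jj *
          ((t + 1 - jj + 2 * e).choose (2 * e) + (n - jj - 3).choose (2 * e + 1))
        = (∑ jj ∈ Finset.range (t+1), jj * (t + 1 - jj + 2 * e).choose (2 * e))
          + ∑ jj ∈ Finset.range (t+1), jj * (n - jj - 3).choose (2 * e + 1) := by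
      rw [← Finset.sum_add_distrib]
      apply Finset.sum_congr rfl
      intro x _
      rw [mul_add]
    rw [hsplit]
    have h1 : t + 1 - 1 + 2 * (e + 1) = t + 2 * e + 2 := by omega
    have h2 : 2 * (e + 1) = 2 * e + 2 := by omega
    have h3 : 2 * (e + 1) + 1 = 2 * e + 3 := by omega
    rw [h3, h1, h2]
    omega


theorem stmt_18 (d n : ℕ) (hn : 2 * (d + 1) ≤ n)
    (V : Type) [Fintype V] (G : SimpleGraph V) (hG : BFree n d G) :
    G.chromaticNumber ≤
      ((Nat.choose (G.cliqueNum - 1 + 2 * d) (2 * d) +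
        Nat.choose (n - 2) (2 * d + 1) : ℕ) : ℕ∞) :=
  (key_colorable d n hn V G hG).chromaticNumber_le
end

section
/- For all integers d ≥ 0 and n ≥ 2(d+1), every triangle-free (i.e., K₃-free) 𝐁_{n,d}-free graph G satisfies χ(G) ≤ n−1. -/
open SimpleGraph

lemma card_of_InB : ∀ (d n : ℕ) (W : Type) (H : SimpleGraph W), InB n d W H → Nat.card W = n := by
  intro d
  induction d with
  | zero => intro n W H h; exact h.1
  | succ d ih =>
    intro n W H h
    obtain ⟨m, hm1, hm2, W', H', hIn, ⟨e⟩⟩ := h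
    have hc' : Nat.card W' = m := ih m W' H' hIn
    haveI hfin : Finite W' := by
      have h0 : 0 < Nat.card W' := by omega
      exact (Nat.card_pos_iff.mp h0).2
    have hW : Nat.card W = Nat.card (Fin (n-m-2) ⊕ (Fin 2 ⊕ W')) := Nat.card_congr e.toEquiv
    have hf : ∀ k : ℕ, Nat.card (Fin k) = k := fun k => by
      simp [Nat.card_eq_fintype_card]
    rw [Nat.card_sum, Nat.card_sum, hc', hf, hf] at hW
    omega

-- greedy coloring lemma
lemma greedy (k : ℕ) : ∀ (N : ℕ) (V : Type) [Fintype V] (G : SimpleGraph V) [DecidableRel G.Adj],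
    Fintype.card V ≤ N → (∀ v, G.degree v ≤ k) → G.Colorable (k + 1) := by
  intro N
  induction N with
  | zero =>
    intro V _ G _ hcard _
    have : IsEmpty V := by rw [← Fintype.card_eq_zero_iff]; omega
    exact Colorable.of_isEmpty _
  | succ N ih =>
    intro V _ G _ hcard hdeg
    classical
    by_cases hne : Nonempty V
    · obtain ⟨v⟩ := hne
      set s : Set V := {w | w ≠ v} with hs
      have hcard' : Fintype.card s ≤ N := by
        have h1 : Fintype.card s < Fintype.card V :=
          Fintype.card_subtype_lt (x := v) (by simp [hs])
        omega
      have hdeg' : ∀ w : s, (G.induce s).degree w ≤ k := by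
        intro w
        have h2 : (G.induce s).degree w ≤ G.degree w.1 := by
          rw [← card_neighborFinset_eq_degree, ← card_neighborFinset_eq_degree]
          apply Finset.card_le_card_of_injOn (fun x => x.1)
          · intro x hx
            simp only [Finset.mem_coe, mem_neighborFinset] at hx ⊢
            exact hx
          · intro a _ b _ hab; exact Subtype.ext hab
        exact h2.trans (hdeg _)
      obtain ⟨C⟩ := ih s (G.induce s) hcard' hdeg'
      set T : Finset (Fin (k+1)) :=
        (G.neighborFinset v).image (fun x => if h : x ≠ v then C ⟨x, h⟩ else 0) with hT
      have hTc : T.card ≤ k := by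
        refine le_trans Finset.card_image_le ?_
        rw [card_neighborFinset_eq_degree]; exact hdeg v
      have hex : ∃ c : Fin (k+1), c ∉ T := by
        by_contra hco
        push_neg at hco
        have : (Finset.univ : Finset (Fin (k+1))).card ≤ T.card :=
          Finset.card_le_card (fun c _ => hco c)
        simp at this
        omega
      obtain ⟨c, hc⟩ := hex
      refine ⟨Coloring.mk (fun w => if h : w ≠ v then C ⟨w, h⟩ else c) ?_⟩
      intro a b hab
      by_cases ha : a ≠ v <;> by_cases hb : b ≠ v
      · simp only [dif_pos ha, dif_pos hb]
        exact C.valid (by simpa using hab)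
      · push_neg at hb; subst hb
        simp only [dif_pos ha, dif_neg (not_not.mpr rfl)]
        intro hEq
        exact hc (hT ▸ Finset.mem_image.mpr
          ⟨a, by rwa [mem_neighborFinset, adj_comm], by rw [dif_pos ha, hEq]⟩)
      · push_neg at ha; subst ha
        simp only [dif_pos hb, dif_neg (not_not.mpr rfl)]
        intro hEq
        exact hc (hT ▸ Finset.mem_image.mpr
          ⟨b, by rwa [mem_neighborFinset], by rw [dif_pos hb, ← hEq]⟩)
      · push_neg at ha hb; subst ha; subst hb; exact absurd hab (G.irrefl)
    · have : IsEmpty V := not_nonempty_iff.mp hne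
      exact Colorable.of_isEmpty _
lemma main : ∀ (d n : ℕ), 2 * (d + 1) ≤ n → ∀ (V : Type) [Fintype V] (G : SimpleGraph V),
    G.CliqueFree 3 → BFree n d G → G.Colorable (n - 1) := by
  intro d
  induction d with
  | zero =>
    intro n hn V _ G htf hG
    classical
    have hdeg : ∀ v, G.degree v ≤ n - 2 := by
      intro v
      by_contra hlt
      push_neg at hlt
      have hcardn : n - 1 ≤ (G.neighborFinset v).card := by
        rw [card_neighborFinset_eq_degree]; omega
      obtain ⟨t, hts, htc⟩ := Finset.exists_subset_card_eq hcardn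
      have hvt : v ∉ t := by
        intro h
        exact G.irrefl ((mem_neighborFinset G v v).mp (hts h))
      set s : Finset V := insert v t with hsdef
      have hvs : v ∈ s := Finset.mem_insert_self v t
      have hscard : Nat.card ↑(s : Set V) = n := by
        rw [Nat.card_coe_set_eq, Set.ncard_coe_finset,
          Finset.card_insert_of_notMem hvt, htc]
        omega
      have hInB : InB n 0 ↑(s : Set V) (G.induce ↑s) := by
        refine ⟨hscard, ⟨v, hvs⟩, ?_⟩
        intro w hw
        have hw1 : w.1 ∈ s := w.2
        have hwv : w.1 ≠ v := fun h => hw (Subtype.ext h)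
        have hwt : w.1 ∈ t := by
          rcases Finset.mem_insert.mp hw1 with h | h
          · exact absurd h hwv
          · exact h
        show G.Adj v w.1
        exact (mem_neighborFinset G v w.1).mp (hts hwt)
      exact (hG _ _ hInB).false (Embedding.comap (Function.Embedding.subtype _) G)
    exact (greedy (n - 2) (Fintype.card V) V G le_rfl hdeg).mono (by omega)
  | succ d ih =>
    intro n hn V _ G htf hG
    classical
    by_cases hB : BFree (n - 2) d G
    · exact (ih (n - 2) (by omega) V G htf hB).mono (by omega)
    · rw [BFree] at hB
      push_neg at hB
      obtain ⟨W, H, hIn, hne⟩ := hB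
      obtain ⟨f⟩ := hne
      have hcardW : Nat.card W = n - 2 := card_of_InB d (n - 2) W H hIn
      haveI : Finite W := (Nat.card_pos_iff.mp (by omega)).2
      haveI : Fintype W := Fintype.ofFinite W
      have key : ∀ x y : V, G.Adj x y → ¬(∃ w, G.Adj (f w) x) → ¬(∃ w, G.Adj (f w) y) → False := by
        intro x y hxy hx hy
        push_neg at hx hy
        have hfx : ∀ w, f w ≠ x := fun w h => hy w (h ▸ hxy)
        have hfy : ∀ w, f w ≠ y := fun w h => hx w (h ▸ hxy.symm)
        set J := graphJoin (⊤ : SimpleGraph (Fin (n - (n - 2) - 2)))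
          ((⊤ : SimpleGraph (Fin 2)) ⊕g H) with hJ
        have hInB' : InB n (d + 1) _ J :=
          ⟨n - 2, by omega, le_rfl, W, H, hIn, ⟨Iso.refl⟩⟩
        have h0 : n - (n - 2) - 2 = 0 := by omega
        let g : (Fin (n - (n - 2) - 2) ⊕ (Fin 2 ⊕ W)) → V :=
          Sum.elim (fun i => absurd i.isLt (by omega))
            (Sum.elim (fun j => if j = 0 then x else y) f)
        have hgx : g (Sum.inr (Sum.inl 0)) = x := rfl
        have hinj : Function.Injective g := by
          rintro (i | j | w) (i' | j' | w') h <;>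
            first
            | exact absurd i.isLt (by omega)
            | exact absurd i'.isLt (by omega)
            | skip
          · fin_cases j <;> fin_cases j' <;> simp_all [g]
          · fin_cases j <;> simp_all [g]
          · fin_cases j' <;> simp_all [g]
          · simp_all [g]
        have hJadj : ∀ (a b : Fin 2 ⊕ W),
            J.Adj (Sum.inr a) (Sum.inr b) ↔ ((⊤ : SimpleGraph (Fin 2)) ⊕g H).Adj a b :=
          fun a b => Iff.rfl
        have hrel : ∀ a b, G.Adj (g a) (g b) ↔ J.Adj a b := by
          rintro (i | j | w) (i' | j' | w') <;>
            first
            | exact absurd i.isLt (by omega)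
            | exact absurd i'.isLt (by omega)
            | skip
          · rw [hJadj]
            fin_cases j <;> fin_cases j' <;>
              simp_all [g, G.adj_comm, G.irrefl]
          · rw [hJadj]
            fin_cases j <;> simp_all [g, G.adj_comm]
          · rw [hJadj]
            fin_cases j' <;> simp_all [g, G.adj_comm]
          · rw [hJadj]
            show G.Adj (f w) (f w') ↔ H.Adj w w'
            exact f.map_adj_iff
        exact (hG _ _ hInB').false ⟨⟨g, hinj⟩, hrel _ _⟩
      let c : V → Option W := fun x => if h : ∃ w, G.Adj (f w) x then some h.choose else none
      have hvalid : ∀ {x y : V}, G.Adj x y → c x ≠ c y := by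
        intro x y hxy
        by_cases hx : ∃ w, G.Adj (f w) x <;> by_cases hy : ∃ w, G.Adj (f w) y
        · simp only [c, dif_pos hx, dif_pos hy, Ne, Option.some.injEq]
          intro hEq
          have h1 : G.Adj (f hx.choose) x := hx.choose_spec
          have h2 : G.Adj (f hx.choose) y := by rw [hEq]; exact hy.choose_spec
          exact htf _ (is3Clique_triple_iff.mpr ⟨h1, h2, hxy⟩)
        · simp [c, dif_pos hx, dif_neg hy]
        · simp [c, dif_pos hy, dif_neg hx]
        · exact absurd (key x y hxy hx hy) not_false
      have hcol : G.Colorable (Fintype.card (Option W)) := (Coloring.mk c hvalid).colorable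
      have hcOW : Fintype.card (Option W) = n - 1 := by
        rw [Fintype.card_option, ← Nat.card_eq_fintype_card, hcardW]
        omega
      rw [hcOW] at hcol
      exact hcol

theorem stmt_19 (d n : ℕ) (hn : 2 * (d + 1) ≤ n)
    (V : Type) [Fintype V] (G : SimpleGraph V)
    (htf : G.CliqueFree 3) (hG : BFree n d G) :
    G.chromaticNumber ≤ ((n - 1 : ℕ) : ℕ∞) := by
  exact (main d n hn V G htf hG).chromaticNumber_le
end
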